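/- arXiv:1109.5164 — 2 statements merged into one kernel-verified Lean document; each statement's English description precedes it below -/
import Mathlib

section
/- Let g ≥ 2 be an integer and r a positive integer. Define, for real t > 0 with t ≠ 1, Q̄(t) = t^{−2r²(g−1)} · Q^{ℍ}_{g}(2r)(t). Then Q̄(1/t) = −Q̄(t) for all real t > 0 with t ≠ 1. -/
open Finset

noncomputable section

/-- `ang x` is `⟨x⟩ = ⌊x⌋ + 1 - x`, the unique element of `(0,1]` with `x + ⟨x⟩ ∈ ℤ`. -/
def ang (x : ℝ) : ℝ := (⌊x⌋ : ℝ) + 1 - x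

/-- `Q^{ℍ}_{g}(2r)(t)`, the mod 2 Poincaré series of the classifying space of the quaternionic
gauge group of a rank `2r` quaternionic bundle on a Klein surface of genus `g` with real points. -/
def QH (g r : ℕ) (t : ℝ) : ℝ :=
  (∏ j ∈ Finset.range (2*r), (1 + t ^ (2*j+1)) ^ g) /
  ((∏ j ∈ Finset.range (r - 1), (1 - t ^ (4*j+4))) * ∏ j ∈ Finset.range r, (1 - t ^ (4*j+4)))

lemma sum_odd (n : ℕ) : ∑ j ∈ range n, (2*j+1) = n^2 := by
  induction n with
  | zero => simp
  | succ n ih => rw [Finset.sum_range_succ, ih]; ring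

lemma sum_four (n : ℕ) : ∑ j ∈ range n, (4*j+4) = 2*n^2 + 2*n := by
  induction n with
  | zero => simp
  | succ n ih => rw [Finset.sum_range_succ, ih]; ring

lemma hNum (t : ℝ) (ht : t ≠ 0) (g n : ℕ) :
    ∏ j ∈ range n, (1 + (1/t)^(2*j+1))^g
      = (∏ j ∈ range n, (1 + t^(2*j+1))^g) / t^(n^2*g) := by
  have step : ∀ j ∈ range n, (1 + (1/t)^(2*j+1))^g
      = (1 + t^(2*j+1))^g / (t^(2*j+1))^g := by
    intro j _
    rw [← div_pow]
    congr 1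
    rw [one_div, inv_pow]
    field_simp
    ring
  rw [Finset.prod_congr rfl step, Finset.prod_div_distrib]
  congr 1
  simp_rw [← pow_mul]
  rw [Finset.prod_pow_eq_pow_sum, ← Finset.sum_mul, sum_odd]

lemma hDen (t : ℝ) (ht : t ≠ 0) (m : ℕ) :
    ∏ j ∈ range m, (1 - (1/t)^(4*j+4))
      = (-1)^m * (∏ j ∈ range m, (1 - t^(4*j+4))) / t^(2*m^2+2*m) := by
  have step : ∀ j ∈ range m, (1 - (1/t)^(4*j+4))
      = (-1) * ((1 - t^(4*j+4)) / t^(4*j+4)) := by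
    intro j _
    rw [one_div, inv_pow]
    field_simp
    ring
  rw [Finset.prod_congr rfl step, Finset.prod_mul_distrib, Finset.prod_const,
    Finset.prod_div_distrib, Finset.prod_pow_eq_pow_sum, sum_four]
  simp [Finset.card_range, mul_div_assoc]

/-- `Q̄(1/t) = -Q̄(t)` for the normalized quaternionic-gauge-group Poincaré series. -/
theorem stmt2 (g r : ℕ) (hg : 2 ≤ g) (hr : 0 < r)
    (t : ℝ) (ht : 0 < t) (ht1 : t ≠ 1) :
    (1/t) ^ (-2 * (r : ℝ)^2 * ((g : ℝ) - 1)) * QH g r (1/t) =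
      -((t : ℝ) ^ (-2 * (r : ℝ)^2 * ((g : ℝ) - 1)) * QH g r t) := by
  obtain ⟨s, rfl⟩ : ∃ s, r = s + 1 := ⟨r - 1, by omega⟩
  obtain ⟨h, rfl⟩ : ∃ h, g = h + 2 := ⟨g - 2, by omega⟩
  have ht0 : t ≠ 0 := ne_of_gt ht
  have hfac : ∀ j : ℕ, (1 : ℝ) - t^(4*j+4) ≠ 0 := by
    intro j
    have hne : t^(4*j+4) ≠ 1 := by
      rcases lt_or_gt_of_ne ht1 with h' | h'
      · exact ne_of_lt (pow_lt_one₀ ht.le h' (by omega))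
      · exact ne_of_gt (one_lt_pow₀ h' (by omega))
    intro h'
    exact hne (by linarith)
  have hD1 : (∏ j ∈ range s, (1 - t^(4*j+4))) ≠ 0 :=
    Finset.prod_ne_zero_iff.mpr fun j _ => hfac j
  have hD2 : (∏ j ∈ range (s+1), (1 - t^(4*j+4))) ≠ 0 :=
    Finset.prod_ne_zero_iff.mpr fun j _ => hfac j
  have hQH : QH (h+2) (s+1) (1/t) = -(t^(4*(s+1)^2*(h+1)))⁻¹ * QH (h+2) (s+1) t := by
    unfold QH
    rw [hNum t ht0, hDen t ht0, hDen t ht0]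
    simp only [Nat.add_sub_cancel]
    have hA : (2*(s+1))^2*(h+2)
        = ((2*s^2+2*s) + (2*(s+1)^2+2*(s+1))) + 4*(s+1)^2*(h+1) := by ring
    rw [hA, pow_add, pow_add]
    rcases Nat.even_or_odd s with hs | hs
    · rw [pow_succ, hs.neg_one_pow]
      field_simp
      rw [pow_succ, hs.neg_one_pow]
      ring
    · rw [pow_succ, hs.neg_one_pow]
      field_simp
      rw [pow_succ, hs.neg_one_pow]
      ring
  rw [hQH, one_div, ← Real.rpow_natCast t (4*(s+1)^2*(h+1)),
    Real.inv_rpow ht.le, ← Real.rpow_neg ht.le, ← Real.rpow_neg ht.le]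
  have key : t ^ (-(-2 * ((s:ℝ)+1)^2 * (((h:ℝ)+2) - 1))) * (t ^ (-((4*(s+1)^2*(h+1) : ℕ) : ℝ)))
      = t ^ (-2 * ((s:ℝ)+1)^2 * (((h:ℝ)+2) - 1)) := by
    rw [← Real.rpow_add ht]
    congr 1
    push_cast
    ring
  push_cast at key ⊢
  linear_combination (-(QH (h+2) (s+1) t)) * key

end
end

section
/- Let g ≥ 2 be an integer, r a positive integer and d' an integer with gcd(r,d') = 1. Define F(t) = (1−t) · P^{ℝ,0}_{g}(r,d')(t) for real t > 0 with t ≠ 1. Then for all such t one has t^{r²(g−1)+1} · F(1/t) = F(t). -/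
open Finset

noncomputable section

/-- `M(r₁,…,r_l; λ) = Σ_{i=1}^{l-1} (r_i + r_{i+1}) · ⟨(r₁+⋯+r_i)·λ⟩` for `L = [r₁,…,r_l]`. -/
def Mfun (L : List ℕ) (lam : ℝ) : ℝ :=
  ∑ i ∈ Finset.range (L.length - 1),
    ((L.getD i 0 : ℝ) + (L.getD (i+1) 0 : ℝ)) * ang (((L.take (i+1)).sum : ℝ) * lam)

/-- `∏_{i=1}^{l-1} (1 - x^{m·(r_i + r_{i+1})})`. -/
def adjProd (x : ℝ) (m : ℕ) (L : List ℕ) : ℝ :=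
  ∏ i ∈ Finset.range (L.length - 1), (1 - x ^ (m * (L.getD i 0 + L.getD (i+1) 0)))

/-- `Σ_{1 ≤ i < j ≤ l} r_i r_j`. -/
def pairSum (L : List ℕ) : ℝ :=
  ∑ i ∈ Finset.range L.length, ∑ j ∈ Finset.Ico (i+1) L.length,
    (L.getD i 0 : ℝ) * (L.getD j 0 : ℝ)

/-- The block factor `∏_{j=1}^{rᵢ}(1+t^{2j-1})^{g+1} / (∏_{j=1}^{rᵢ-1}(1-t^{2j}) ∏_{j=1}^{rᵢ}(1-t^{2j}))`. -/
def blockR0 (g : ℕ) (t : ℝ) (ri : ℕ) : ℝ :=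
  (∏ j ∈ Finset.range ri, (1 + t ^ (2*j+1)) ^ (g+1)) /
  ((∏ j ∈ Finset.range (ri - 1), (1 - t ^ (2*j+2))) * ∏ j ∈ Finset.range ri, (1 - t ^ (2*j+2)))

/-- The closed formula `P^{ℝ,0}_g(r,d)(t)` (real bundles, no real points). -/
def PR0 (g r : ℕ) (d : ℤ) (t : ℝ) : ℝ :=
  ∑ c : Composition r,
    (-1 : ℝ) ^ (c.length - 1) *
    (t ^ (2 * Mfun c.blocks ((d : ℝ) / (r : ℝ))) / adjProd t 2 c.blocks) *
    t ^ (((g : ℝ) - 1) * pairSum c.blocks) *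
    (c.blocks.map (blockR0 g t)).prod

/-! ### Auxiliary definitions -/

/-- Sum of adjacent pairs `Σ_{i<l-1} (r_i + r_{i+1})`. -/
def Asum (L : List ℕ) : ℕ := ∑ i ∈ Finset.range (L.length - 1), (L.getD i 0 + L.getD (i+1) 0)

/-- Sum of squares of the entries. -/
def Qsum (L : List ℕ) : ℕ := ∑ i ∈ Finset.range L.length, (L.getD i 0)^2

/-- Reversal of a composition. -/
def Composition.rev {r : ℕ} (c : Composition r) : Composition r :=
  ⟨c.blocks.reverse, fun h => c.blocks_pos (List.mem_reverse.mp h),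
   by rw [List.sum_reverse, c.blocks_sum]⟩

lemma Composition.rev_rev {r : ℕ} (c : Composition r) : c.rev.rev = c := by
  cases c with
  | mk b p s => simp only [Composition.rev, List.reverse_reverse]

/-- Reversal as an equivalence on compositions. -/
def revEquiv (r : ℕ) : Equiv (Composition r) (Composition r) :=
  ⟨Composition.rev, Composition.rev, Composition.rev_rev, Composition.rev_rev⟩

/-! ### Elementary facts -/

lemma pow_ne_one_aux {t : ℝ} (ht : 0 < t) (ht1 : t ≠ 1) {n : ℕ} (hn : n ≠ 0) : t ^ n ≠ 1 := by
  intro h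
  rcases lt_trichotomy t 1 with h1 | h1 | h1
  · nlinarith [pow_lt_one₀ ht.le h1 hn]
  · exact ht1 h1
  · nlinarith [one_lt_pow₀ h1 hn]

lemma sum_even (n : ℕ) : ∑ j ∈ range n, (2*j+2) = n*(n+1) := by
  induction n with
  | zero => simp
  | succ n ih => rw [Finset.sum_range_succ, ih]; ring

lemma getD_reverse (L : List ℕ) (i : ℕ) (h : i < L.length) :
    L.reverse.getD i 0 = L.getD (L.length - 1 - i) 0 := by
  rw [List.getD_eq_getElem _ _ (by simpa using h), List.getD_eq_getElem _ _ (by omega)]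
  simp [List.getElem_reverse]

/-! ### ang lemmas -/

lemma ang_add_int (x : ℝ) (n : ℤ) : ang (x + n) = ang x := by
  unfold ang
  rw [Int.floor_add_intCast]; push_cast; ring

lemma ang_neg {x : ℝ} (hx : ∀ n : ℤ, x ≠ n) : ang (-x) = 1 - ang x := by
  have hfl : (⌊x⌋ : ℝ) ≠ x := fun h => hx ⌊x⌋ h.symm
  have h1 : ⌊-x⌋ = -⌊x⌋ - 1 := by
    have h2 := Int.floor_le x
    have h3 := Int.lt_floor_add_one x
    have h2' : (⌊x⌋ : ℝ) < x := lt_of_le_of_ne h2 hfl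
    have : (⌊-x⌋ : ℤ) = -(⌊x⌋ + 1) := by
      apply Int.floor_eq_iff.mpr
      constructor <;> push_cast <;> nlinarith
    omega
  simp only [ang, h1]
  push_cast
  ring

-- helper lemmas
-- helper sums lemmas
lemma take_rev_sum (L : List ℕ) (k : ℕ) (h : k ≤ L.length) :
    (L.reverse.take k).sum + (L.take (L.length - k)).sum = L.sum := by
  have h2 := List.reverse_drop (l := L) (i := L.length - k)
  rw [Nat.sub_sub_self h] at h2
  rw [← h2, List.sum_reverse, Nat.add_comm, List.sum_take_add_sum_drop]

lemma sum_take_pos (L : List ℕ) (hL : ∀ x ∈ L, 0 < x) (m : ℕ) (h1 : 1 ≤ m) (h2 : m ≤ L.length) :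
    0 < (L.take m).sum := by
  have hne : L.take m ≠ [] := by
    intro h
    have := congrArg List.length h
    simp [h2] at this
    omega
  rcases List.exists_mem_of_ne_nil _ hne with ⟨x, hx⟩
  have hxL : x ∈ L := List.take_subset _ _ hx
  calc 0 < x := hL x hxL
    _ ≤ (L.take m).sum := List.single_le_sum (fun y _ => Nat.zero_le y) x hx

lemma getD_mem (L : List ℕ) (i : ℕ) (h : i < L.length) : L.getD i 0 ∈ L := by
  rw [List.getD_eq_getElem _ _ h]
  exact List.getElem_mem h

lemma sum_getD (L : List ℕ) : ∑ i ∈ range L.length, L.getD i 0 = L.sum := by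
  induction L with
  | nil => simp
  | cons a L ih =>
    rw [List.length_cons, Finset.sum_range_succ']
    simp only [List.getD_cons_succ, List.getD_cons_zero, List.sum_cons, ih]
    omega

lemma pair_sq (n : ℕ) (f : ℕ → ℝ) :
    2 * ∑ i ∈ range n, ∑ j ∈ Finset.Ico (i+1) n, f i * f j
      = (∑ i ∈ range n, f i)^2 - ∑ i ∈ range n, (f i)^2 := by
  induction n with
  | zero => simp
  | succ n ih =>
    have h1 : ∀ i ∈ range n, ∑ j ∈ Finset.Ico (i+1) (n+1), f i * f j
        = (∑ j ∈ Finset.Ico (i+1) n, f i * f j) + f i * f n := by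
      intro i hi
      have := Finset.mem_range.mp hi
      rw [Finset.sum_Ico_succ_top (by omega : i+1 ≤ n)]
    rw [Finset.sum_range_succ, Finset.sum_congr rfl h1, Finset.sum_add_distrib,
      ← Finset.sum_mul, Finset.sum_range_succ (f := f), Finset.sum_range_succ (f := fun i => (f i)^2)]
    simp only [Finset.Ico_self, Finset.sum_empty, add_zero]
    nlinarith [ih]

/-! ### Behaviour of each factor under t ↦ 1/t -/

lemma prod_one_add_inv {t : ℝ} (ht : 0 < t) (n : ℕ) :
    ∏ j ∈ range n, (1 + (t⁻¹) ^ (2*j+1)) = (∏ j ∈ range n, (1 + t ^ (2*j+1))) / t ^ (n^2) := by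
  have ht0 : t ≠ 0 := ht.ne'
  have : ∀ j ∈ range n, (1 + (t⁻¹) ^ (2*j+1)) = (1 + t ^ (2*j+1)) * (t ^ (2*j+1))⁻¹ := by
    intro j _
    rw [inv_pow]
    field_simp
    ring
  rw [Finset.prod_congr rfl this, Finset.prod_mul_distrib, Finset.prod_inv_distrib,
    Finset.prod_pow_eq_pow_sum, sum_odd, div_eq_mul_inv]

lemma prod_one_sub_inv {t : ℝ} (ht : 0 < t) (m : ℕ) (e : ℕ → ℕ) :
    ∏ j ∈ range m, (1 - (t⁻¹) ^ (e j)) =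
      (-1)^m * (∏ j ∈ range m, (1 - t ^ (e j))) / t ^ (∑ j ∈ range m, e j) := by
  have ht0 : t ≠ 0 := ht.ne'
  have : ∀ j ∈ range m, (1 - (t⁻¹) ^ (e j)) = (-1) * (1 - t ^ (e j)) * (t ^ (e j))⁻¹ := by
    intro j _
    rw [inv_pow]
    field_simp
    ring
  rw [Finset.prod_congr rfl this, Finset.prod_mul_distrib, Finset.prod_mul_distrib,
    Finset.prod_inv_distrib, Finset.prod_pow_eq_pow_sum, Finset.prod_const,
    div_eq_mul_inv, Finset.card_range]

lemma one_sub_pow_ne {t : ℝ} (ht : 0 < t) (ht1 : t ≠ 1) (m : ℕ) :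
    ∏ j ∈ range m, (1 - t ^ (2*j+2)) ≠ 0 := by
  apply Finset.prod_ne_zero_iff.mpr
  intro j _
  have := pow_ne_one_aux ht ht1 (n := 2*j+2) (by omega)
  intro h
  exact this (by linarith)

lemma blockR0_inv {g : ℕ} (hg : 1 ≤ g) {t : ℝ} (ht : 0 < t) (ht1 : t ≠ 1)
    {ri : ℕ} (hri : 1 ≤ ri) :
    blockR0 g t⁻¹ ri = -(blockR0 g t ri / t ^ ((g-1) * ri^2)) := by
  obtain ⟨k, rfl⟩ : ∃ k, g = k + 1 := ⟨g - 1, by omega⟩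
  obtain ⟨m, rfl⟩ : ∃ m, ri = m + 1 := ⟨ri - 1, by omega⟩
  have ht0 : t ≠ 0 := ht.ne'
  unfold blockR0
  rw [Finset.prod_pow, Finset.prod_pow, prod_one_add_inv ht,
    prod_one_sub_inv ht (m+1-1) (fun j => 2*j+2), prod_one_sub_inv ht (m+1) (fun j => 2*j+2),
    sum_even, sum_even]
  have hD1 := one_sub_pow_ne ht ht1 (m+1-1)
  have hD2 := one_sub_pow_ne ht ht1 (m+1)
  set a := ∏ j ∈ range (m+1), (1 + t ^ (2*j+1))
  set D1 := ∏ j ∈ range (m+1-1), (1 - t ^ (2*j+2))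
  set D2 := ∏ j ∈ range (m+1), (1 - t ^ (2*j+2))
  simp only [Nat.add_sub_cancel]
  field_simp
  ring_nf
  rw [pow_mul]
  norm_num
  field_simp
  ring

lemma Qsum_cons (a : ℕ) (L : List ℕ) : Qsum (a :: L) = a^2 + Qsum L := by
  unfold Qsum
  rw [List.length_cons, Finset.sum_range_succ']
  simp only [List.getD_cons_succ, List.getD_cons_zero]
  omega

lemma blocks_prod_inv {g : ℕ} (hg : 1 ≤ g) {t : ℝ} (ht : 0 < t) (ht1 : t ≠ 1)
    (L : List ℕ) (hL : ∀ x ∈ L, 0 < x) :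
    (L.map (blockR0 g t⁻¹)).prod =
      (-1)^L.length * (L.map (blockR0 g t)).prod / t ^ ((g-1) * Qsum L) := by
  have ht0 : t ≠ 0 := ht.ne'
  induction L with
  | nil => simp [Qsum]
  | cons a L ih =>
    have ha : 1 ≤ a := hL a List.mem_cons_self
    have ihh := ih (fun x hx => hL x (List.mem_cons_of_mem a hx))
    rw [List.map_cons, List.prod_cons, ihh, blockR0_inv hg ht ht1 ha, Qsum_cons,
      List.length_cons, List.map_cons, List.prod_cons, Nat.mul_add, pow_add, pow_succ]
    field_simp
    ring

lemma adjProd_inv {t : ℝ} (ht : 0 < t) (L : List ℕ) :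
    adjProd t⁻¹ 2 L = (-1)^(L.length - 1) * adjProd t 2 L / t ^ (2 * Asum L) := by
  unfold adjProd
  rw [prod_one_sub_inv ht (L.length - 1) (fun i => 2 * (L.getD i 0 + L.getD (i+1) 0)),
    ← Finset.mul_sum]
  rfl

lemma adjProd_ne_zero {t : ℝ} (ht : 0 < t) (ht1 : t ≠ 1) (L : List ℕ) (hL : ∀ x ∈ L, 0 < x) :
    adjProd t 2 L ≠ 0 := by
  unfold adjProd
  apply Finset.prod_ne_zero_iff.mpr
  intro i hi
  have hi' := Finset.mem_range.mp hi
  have h1 : 0 < L.getD i 0 := hL _ (getD_mem L i (by omega))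
  have := pow_ne_one_aux ht ht1 (n := 2 * (L.getD i 0 + L.getD (i+1) 0)) (by omega)
  intro h
  exact this (by linarith)

/-! ### Reversal invariance -/

lemma sum_drop_pos (L : List ℕ) (hL : ∀ x ∈ L, 0 < x) (m : ℕ) (h2 : m < L.length) :
    0 < (L.drop m).sum := by
  have hne : L.drop m ≠ [] := by
    intro h
    have := congrArg List.length h
    simp at this
    omega
  rcases List.exists_mem_of_ne_nil _ hne with ⟨x, hx⟩
  have hxL : x ∈ L := List.drop_subset _ _ hx
  calc 0 < x := hL x hxL
    _ ≤ (L.drop m).sum := List.single_le_sum (fun y _ => Nat.zero_le y) x hx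

lemma Asum_reverse (L : List ℕ) : Asum L.reverse = Asum L := by
  unfold Asum
  rw [List.length_reverse,
    ← Finset.sum_range_reflect (fun i => (L.getD i 0 + L.getD (i+1) 0)) (L.length - 1)]
  apply Finset.sum_congr rfl
  intro i hi
  have hi' := Finset.mem_range.mp hi
  rw [getD_reverse L i (by omega), getD_reverse L (i+1) (by omega)]
  have e1 : L.length - 1 - (i+1) = L.length - 1 - 1 - i := by omega
  have e2 : L.length - 1 - i = L.length - 1 - 1 - i + 1 := by omega
  rw [e1, e2, Nat.add_comm]

lemma adjProd_reverse (t : ℝ) (m : ℕ) (L : List ℕ) : adjProd t m L.reverse = adjProd t m L := by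
  unfold adjProd
  rw [List.length_reverse,
    ← Finset.prod_range_reflect (fun i => (1 - t ^ (m * (L.getD i 0 + L.getD (i+1) 0)))) (L.length - 1)]
  apply Finset.prod_congr rfl
  intro i hi
  have hi' := Finset.mem_range.mp hi
  rw [getD_reverse L i (by omega), getD_reverse L (i+1) (by omega)]
  have e1 : L.length - 1 - (i+1) = L.length - 1 - 1 - i := by omega
  have e2 : L.length - 1 - i = L.length - 1 - 1 - i + 1 := by omega
  rw [e1, e2, Nat.add_comm (L.getD (L.length - 1 - 1 - i + 1) 0)]

lemma Qsum_reverse (L : List ℕ) : Qsum L.reverse = Qsum L := by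
  unfold Qsum
  rw [List.length_reverse, ← Finset.sum_range_reflect (fun i => (L.getD i 0)^2) L.length]
  apply Finset.sum_congr rfl
  intro i hi
  have hi' := Finset.mem_range.mp hi
  rw [getD_reverse L i (by omega)]

lemma pairSum_eq (L : List ℕ) : 2 * pairSum L = ((L.sum : ℝ))^2 - (Qsum L : ℝ) := by
  unfold pairSum
  rw [pair_sq L.length (fun i => (L.getD i 0 : ℝ))]
  congr 1
  · rw [← sum_getD L]
    push_cast
    rfl
  · unfold Qsum
    push_cast
    rfl

lemma pairSum_reverse (L : List ℕ) : pairSum L.reverse = pairSum L := by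
  have h1 := pairSum_eq L
  have h2 := pairSum_eq L.reverse
  rw [List.sum_reverse, Qsum_reverse] at h2
  linarith

lemma sig_not_int {r : ℕ} (hr : 0 < r) (d : ℤ) (hcop : Int.gcd (r : ℤ) d = 1)
    {σ : ℕ} (h1 : 0 < σ) (h2 : σ < r) (n : ℤ) :
    (σ : ℝ) * ((d : ℝ) / (r : ℝ)) ≠ (n : ℝ) := by
  intro h
  have hr0 : (r : ℝ) ≠ 0 := Nat.cast_ne_zero.mpr hr.ne'
  have hR : (σ : ℝ) * (d : ℝ) = (n : ℝ) * (r : ℝ) := by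
    field_simp at h
    linarith
  have hz : (σ : ℤ) * d = n * r := by exact_mod_cast hR
  have hdvd : (r : ℤ) ∣ (σ : ℤ) * d := ⟨n, by linarith⟩
  have hds : (r : ℤ) ∣ (σ : ℤ) := Int.dvd_of_dvd_mul_left_of_gcd_one hdvd hcop
  have : (r : ℤ) ≤ (σ : ℤ) := Int.le_of_dvd (by exact_mod_cast h1) hds
  omega

lemma Mfun_reverse {r : ℕ} (hr : 0 < r) (d : ℤ) (hcop : Int.gcd (r : ℤ) d = 1)
    (L : List ℕ) (hL : ∀ x ∈ L, 0 < x) (hsum : L.sum = r) :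
    Mfun L.reverse ((d : ℝ) / (r : ℝ)) = (Asum L : ℝ) - Mfun L ((d : ℝ) / (r : ℝ)) := by
  have hr0 : (r : ℝ) ≠ 0 := Nat.cast_ne_zero.mpr hr.ne'
  set lam : ℝ := (d : ℝ) / (r : ℝ) with hlam
  unfold Mfun
  rw [List.length_reverse]
  have hstep : ∀ i ∈ Finset.range (L.length - 1),
      ((L.reverse.getD i 0 : ℝ) + (L.reverse.getD (i+1) 0 : ℝ)) *
        ang (((L.reverse.take (i+1)).sum : ℝ) * lam)
      = (fun k => ((L.getD k 0 : ℝ) + (L.getD (k+1) 0 : ℝ)) *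
          (1 - ang (((L.take (k+1)).sum : ℝ) * lam))) (L.length - 1 - 1 - i) := by
    intro i hi
    have hi' := Finset.mem_range.mp hi
    set k := L.length - 1 - 1 - i with hk
    have hk1 : L.length - 1 - i = k + 1 := by omega
    have hk2 : L.length - 1 - (i+1) = k := by omega
    -- the adjacent-pair coefficients
    rw [getD_reverse L i (by omega), getD_reverse L (i+1) (by omega), hk1, hk2]
    -- the partial sum of the reversed list
    have htk := take_rev_sum L (i+1) (by omega)
    have hlk : L.length - (i+1) = k + 1 := by omega
    rw [hlk] at htk
    have hσpos : 0 < (L.take (k+1)).sum := sum_take_pos L hL (k+1) (by omega) (by omega)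
    have hσlt : (L.take (k+1)).sum < r := by
      have hd := sum_drop_pos L hL (k+1) (by omega)
      have := List.sum_take_add_sum_drop L (k+1)
      omega
    have hcast : ((L.reverse.take (i+1)).sum : ℝ) = (r : ℝ) - ((L.take (k+1)).sum : ℝ) := by
      have : (L.reverse.take (i+1)).sum = r - (L.take (k+1)).sum := by omega
      rw [this]
      push_cast [Nat.le_of_lt hσlt]
      ring
    rw [hcast]
    have harg : ((r : ℝ) - ((L.take (k+1)).sum : ℝ)) * lam
        = -(((L.take (k+1)).sum : ℝ) * lam) + (d : ℤ) := by
      rw [hlam]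
      push_cast
      field_simp
      ring
    rw [harg, ang_add_int, ang_neg (fun n => sig_not_int hr d hcop hσpos hσlt n)]
    ring
  rw [Finset.sum_congr rfl hstep,
    Finset.sum_range_reflect
      (fun k => ((L.getD k 0 : ℝ) + (L.getD (k+1) 0 : ℝ)) *
        (1 - ang (((L.take (k+1)).sum : ℝ) * lam))) (L.length - 1)]
  simp only [mul_one_sub]
  rw [Finset.sum_sub_distrib]
  congr 1
  · unfold Asum
    push_cast
    rfl

/-! ### Key identity relating squares, pair sums -/

lemma sq_sum_eq (L : List ℕ) : ((L.sum : ℝ))^2 = (Qsum L : ℝ) + 2 * pairSum L := by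
  have := pairSum_eq L; linarith

/-! ### The per-composition term identity -/

lemma term_inv (g r : ℕ) (hg : 2 ≤ g) (hr : 0 < r) (d : ℤ) (hcop : Int.gcd (r : ℤ) d = 1)
    (t : ℝ) (ht : 0 < t) (ht1 : t ≠ 1) (c : Composition r) :
    (-1 : ℝ) ^ (c.length - 1) *
      (t⁻¹ ^ (2 * Mfun c.blocks ((d : ℝ) / (r : ℝ))) / adjProd t⁻¹ 2 c.blocks) *
      t⁻¹ ^ (((g : ℝ) - 1) * pairSum c.blocks) *
      (c.blocks.map (blockR0 g t⁻¹)).prod =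
    -((t ^ ((r:ℝ)^2 * ((g:ℝ) - 1)))⁻¹ *
      ((-1 : ℝ) ^ (c.rev.length - 1) *
      (t ^ (2 * Mfun c.rev.blocks ((d : ℝ) / (r : ℝ))) / adjProd t 2 c.rev.blocks) *
      t ^ (((g : ℝ) - 1) * pairSum c.rev.blocks) *
      (c.rev.blocks.map (blockR0 g t)).prod)) := by
  have ht0 : t ≠ 0 := ht.ne'
  set L := c.blocks with hLdef
  have hL : ∀ x ∈ L, 0 < x := fun x hx => c.blocks_pos hx
  have hsum : L.sum = r := c.blocks_sum
  have hLne : L ≠ [] := by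
    intro h
    rw [h] at hsum
    simp at hsum
    omega
  obtain ⟨l0, hl0⟩ : ∃ l0, L.length = l0 + 1 := ⟨L.length - 1, by
    have := List.length_pos_iff.mpr hLne
    omega⟩
  have hclen : c.length = L.length := rfl
  have hrevb : c.rev.blocks = L.reverse := rfl
  have hrevlen : c.rev.length = L.length := by
    show L.reverse.length = L.length
    exact List.length_reverse
  set lam : ℝ := (d : ℝ) / (r : ℝ) with hlam
  have ha : adjProd t 2 L ≠ 0 := adjProd_ne_zero ht ht1 L hL
  have hg1 : 1 ≤ g := by omega
  -- abbreviations
  set M := Mfun L lam with hM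
  set P := pairSum L with hP
  set B := (L.map (blockR0 g t)).prod with hB
  set a := adjProd t 2 L with haa
  set A := Asum L with hA
  set Q := Qsum L with hQ
  have hsq : ((r:ℝ))^2 = (Q : ℝ) + 2 * P := by
    rw [← hsum]
    push_cast
    have := sq_sum_eq L
    push_cast at this
    linarith
  -- the combined exponent
  set E : ℝ := (r:ℝ)^2 * ((g:ℝ) - 1) with hE
  set W : ℝ := -E + 2 * ((A : ℝ) - M) + ((g:ℝ) - 1) * P with hW
  -- decomposition of t ^ W in terms of the RHS exponents
  have hW2 : t ^ W = t ^ (-E) * t ^ (2 * ((A : ℝ) - M)) * t ^ (((g:ℝ) - 1) * P) := by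
    rw [hW, Real.rpow_add ht, Real.rpow_add ht]
  -- decomposition of t ^ W in terms of the LHS exponents
  have hQc : (((g-1) * Q : ℕ) : ℝ) = ((g:ℝ) - 1) * (Q : ℝ) := by
    rw [Nat.cast_mul, Nat.cast_sub hg1]
    push_cast
    ring
  have hWe : W = (-(2 * M)) + (((2 * A : ℕ)) : ℝ) + (-(((g:ℝ) - 1) * P))
      + (-((((g-1) * Q : ℕ)) : ℝ)) := by
    rw [hW, hE, hQc]
    push_cast
    linear_combination ((1:ℝ) - (g:ℝ)) * hsq
  have hW1 : t ^ W = t ^ (-(2 * M)) * t ^ (((2 * A : ℕ)) : ℝ) * t ^ (-(((g:ℝ) - 1) * P))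
      * (t ^ ((((g-1) * Q : ℕ)) : ℝ))⁻¹ := by
    rw [hWe, Real.rpow_add ht, Real.rpow_add ht, Real.rpow_add ht,
      Real.rpow_neg ht.le ((((g-1) * Q : ℕ)) : ℝ)]
  -- rewrite the left-hand side
  rw [hclen, hrevlen, hrevb, hl0, Nat.add_sub_cancel]
  rw [adjProd_inv ht L, blocks_prod_inv hg1 ht ht1 L hL,
    adjProd_reverse, pairSum_reverse, List.map_reverse, List.prod_reverse,
    Mfun_reverse hr d hcop L hL hsum]
  rw [Real.inv_rpow ht.le, Real.inv_rpow ht.le, ← Real.rpow_neg ht.le, ← Real.rpow_neg ht.le,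
    ← Real.rpow_natCast t (2 * A), ← Real.rpow_natCast t ((g-1) * Q), hl0, Nat.add_sub_cancel]
  rw [show (t ^ ((r:ℝ)^2 * ((g:ℝ) - 1)))⁻¹ = t ^ (-E) by
    rw [← Real.rpow_neg ht.le]]
  -- pass through the canonical middle value
  have hT1 : t ^ (-(2 * M)) ≠ 0 := (Real.rpow_pos_of_pos ht _).ne'
  have hT2 : t ^ (((2 * A : ℕ)) : ℝ) ≠ 0 := (Real.rpow_pos_of_pos ht _).ne'
  have hT3 : t ^ (-(((g:ℝ) - 1) * P)) ≠ 0 := (Real.rpow_pos_of_pos ht _).ne'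
  have hT4 : t ^ ((((g-1) * Q : ℕ)) : ℝ) ≠ 0 := (Real.rpow_pos_of_pos ht _).ne'
  have hTE : t ^ (-E) ≠ 0 := (Real.rpow_pos_of_pos ht _).ne'
  have hmid : (-1 : ℝ)^(l0+1) * (B / a) * t ^ W =
      -((t ^ (-E)) * ((-1 : ℝ) ^ l0 * (t ^ (2 * ((A : ℝ) - M)) / a) * t ^ (((g:ℝ) - 1) * P) * B)) := by
    rw [hW2, pow_succ]
    field_simp
  rw [← hmid, hW1, pow_succ]
  field_simp
  ring
  rw [← haa, mul_inv_cancel_right₀ ha]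

lemma PR0_inv (g r : ℕ) (hg : 2 ≤ g) (hr : 0 < r) (d : ℤ) (hcop : Int.gcd (r : ℤ) d = 1)
    (t : ℝ) (ht : 0 < t) (ht1 : t ≠ 1) :
    PR0 g r d t⁻¹ = -((t ^ ((r:ℝ)^2 * ((g:ℝ) - 1)))⁻¹ * PR0 g r d t) := by
  unfold PR0
  rw [← Equiv.sum_comp (revEquiv r) (fun c =>
    (-1 : ℝ) ^ (c.length - 1) *
    (t ^ (2 * Mfun c.blocks ((d : ℝ) / (r : ℝ))) / adjProd t 2 c.blocks) *
    t ^ (((g : ℝ) - 1) * pairSum c.blocks) *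
    (c.blocks.map (blockR0 g t)).prod), Finset.mul_sum, ← Finset.sum_neg_distrib]
  exact Finset.sum_congr rfl fun c _ => term_inv g r hg hr d hcop t ht ht1 c

/-- Strange Poincaré duality for `(1-t)·P^{ℝ,0}_g(r,d')`
(Theorem `strange_Poincare_duality_no_real_points` (1)). -/
theorem stmt4 (g r : ℕ) (hg : 2 ≤ g) (hr : 0 < r)
    (d' : ℤ) (hcop : Int.gcd (r : ℤ) d' = 1)
    (t : ℝ) (ht : 0 < t) (ht1 : t ≠ 1) :
    t ^ ((r : ℝ)^2 * ((g : ℝ) - 1) + 1) * ((1 - 1/t) * PR0 g r d' (1/t)) =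
      (1 - t) * PR0 g r d' t := by
  have ht0 : t ≠ 0 := ht.ne'
  rw [one_div, PR0_inv g r hg hr d' hcop t ht ht1]
  rw [Real.rpow_add ht, Real.rpow_one]
  have hE : t ^ ((r:ℝ)^2 * ((g:ℝ) - 1)) ≠ 0 := (Real.rpow_pos_of_pos ht _).ne'
  field_simp
  ring

end
end
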